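/- Let θ be irrational, M ≥ 1, write P^in_θ(M) = (a₁,…,a_k) and P^out_θ(M) = (b₁,…,b_l) nonincreasingly, let m be minimal with ∑_{j=1}^m bⱼ ≥ a₁, and set b̄ := ∑_{j=1}^m bⱼ − a₁. Suppose k > 1 (so b̄ > 0). Then ⌊b̄θ⌋ = ∑_{j=1}^m ⌊bⱼθ⌋ − ⌈a₁θ⌉. -/

import Mathlib

open scoped Classical
open Finset

/-- The next (largest) entry of the incoming partition: the largest `a ∈ {1,…,M}`
such that `⌈aθ⌉/a < ⌈a'θ⌉/a'` for all `a' ∈ {1,…,a−1}`. -/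
noncomputable def pinStep (θ : ℝ) (M : ℕ) : ℕ :=
  WithBot.unbotD 0 (((Finset.Icc 1 M).filter (fun a : ℕ => ∀ a' ∈ Finset.Ico 1 a,
      ((⌈(a : ℝ) * θ⌉ : ℤ) : ℝ) / (a : ℝ) < ((⌈(a' : ℝ) * θ⌉ : ℤ) : ℝ) / (a' : ℝ))).max)

/-- Fuel-based recursion computing the incoming partition `P^in_θ(M)`. -/
noncomputable def pinListAux (θ : ℝ) : ℕ → ℕ → List ℕ
  | 0, _ => []
  | fuel + 1, M =>
      if M = 0 then [] else pinStep θ M :: pinListAux θ fuel (M - pinStep θ M)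

/-- The incoming partition `P^in_θ(M)`, listed in the order produced by the recursion
(which is nonincreasing). -/
noncomputable def pinList (θ : ℝ) (M : ℕ) : List ℕ := pinListAux θ M M

/-- The outgoing partition `P^out_θ(M) := P^in_{−θ}(M)`. -/
noncomputable def poutList (θ : ℝ) (M : ℕ) : List ℕ := pinList (-θ) M

/- ----------------- auxiliary lemmas ----------------- -/

lemma mem_filter' {p : ℕ → Prop} {inst : DecidablePred p} {s : Finset ℕ} {x : ℕ} :
    x ∈ @Finset.filter ℕ p inst s ↔ x ∈ s ∧ p x :=
  @Finset.mem_filter ℕ p inst s x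

lemma max_unbot'_spec {s : Finset ℕ} (h : s.Nonempty) :
    WithBot.unbotD 0 s.max ∈ s ∧ ∀ x ∈ s, x ≤ WithBot.unbotD 0 s.max := by
  obtain ⟨a, ha⟩ := Finset.max_of_nonempty h
  rw [ha, WithBot.unbotD_coe]
  refine ⟨Finset.mem_of_max ha, fun x hx => ?_⟩
  have := (Finset.le_max hx).trans_eq ha
  exact_mod_cast this

lemma pinStep_spec (θ : ℝ) (M : ℕ) (hM : 1 ≤ M) :
    (1 ≤ pinStep θ M ∧ pinStep θ M ≤ M) ∧
      ∀ n : ℕ, 1 ≤ n → n ≤ M →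
        ((⌈(pinStep θ M : ℝ) * θ⌉ : ℤ) : ℝ) / (pinStep θ M : ℝ) ≤
          ((⌈(n : ℝ) * θ⌉ : ℤ) : ℝ) / (n : ℝ) := by
  classical
  set crit : ℕ → ℝ := fun a => ((⌈(a : ℝ) * θ⌉ : ℤ) : ℝ) / (a : ℝ) with hcrit
  set S := ((Finset.Icc 1 M).filter (fun a : ℕ => ∀ a' ∈ Finset.Ico 1 a,
      ((⌈(a : ℝ) * θ⌉ : ℤ) : ℝ) / (a : ℝ) < ((⌈(a' : ℝ) * θ⌉ : ℤ) : ℝ) / (a' : ℝ))) with hSdef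
  have hps : pinStep θ M = WithBot.unbotD 0 S.max := rfl
  -- the set of global minimizers of crit
  set T := ((Finset.Icc 1 M).filter (fun a : ℕ => ∀ b ∈ Finset.Icc 1 M, crit a ≤ crit b))
    with hTdef
  have hTne : T.Nonempty := by
    obtain ⟨a, ha, hmin⟩ := Finset.exists_min_image (Finset.Icc 1 M) crit
      ⟨1, by simp [hM]⟩
    exact ⟨a, mem_filter'.2 ⟨ha, hmin⟩⟩
  set q := T.min' hTne with hq
  have hqT : q ∈ T := Finset.min'_mem _ _
  have hqmem : q ∈ Finset.Icc 1 M := (mem_filter'.1 hqT).1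
  have hqmin : ∀ b ∈ Finset.Icc 1 M, crit q ≤ crit b := (mem_filter'.1 hqT).2
  have hq1 : 1 ≤ q := (Finset.mem_Icc.1 hqmem).1
  have hqM : q ≤ M := (Finset.mem_Icc.1 hqmem).2
  have hqS : q ∈ S := by
    rw [hSdef]
    refine mem_filter'.2 ⟨hqmem, fun a' ha' => ?_⟩
    have ha'1 : 1 ≤ a' := (Finset.mem_Ico.1 ha').1
    have ha'q : a' < q := (Finset.mem_Ico.1 ha').2
    have ha'mem : a' ∈ Finset.Icc 1 M := Finset.mem_Icc.2 ⟨ha'1, by omega⟩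
    have hle : crit q ≤ crit a' := hqmin a' ha'mem
    rcases lt_or_eq_of_le hle with h | h
    · exact h
    · exfalso
      have ha'T : a' ∈ T := by
        rw [hTdef]
        exact mem_filter'.2 ⟨ha'mem, fun b hb => h ▸ hqmin b hb⟩
      have := Finset.min'_le T a' ha'T
      omega
  have hSne : S.Nonempty := ⟨q, hqS⟩
  obtain ⟨hpS, hpmax⟩ := max_unbot'_spec hSne
  rw [← hps] at hpS hpmax
  have hpS' := mem_filter'.1 (hSdef ▸ hpS)
  have hpmem : pinStep θ M ∈ Finset.Icc 1 M := hpS'.1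
  have hprec : ∀ a' ∈ Finset.Ico 1 (pinStep θ M), crit (pinStep θ M) < crit a' := hpS'.2
  have hp1 : 1 ≤ pinStep θ M := (Finset.mem_Icc.1 hpmem).1
  have hpM : pinStep θ M ≤ M := (Finset.mem_Icc.1 hpmem).2
  refine ⟨⟨hp1, hpM⟩, fun n hn1 hnM => ?_⟩
  have hqp : q ≤ pinStep θ M := hpmax q hqS
  have hqeq : q = pinStep θ M := by
    rcases lt_or_eq_of_le hqp with h | h
    · exfalso
      have hqIco : q ∈ Finset.Ico 1 (pinStep θ M) := Finset.mem_Ico.2 ⟨hq1, h⟩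
      have h1 := hprec q hqIco
      have h2 := hqmin (pinStep θ M) hpmem
      linarith
    · exact h
  have := hqmin n (Finset.mem_Icc.2 ⟨hn1, hnM⟩)
  rw [hqeq] at this
  exact this

lemma irr_nat_mul {θ : ℝ} (hθ : Irrational θ) {n : ℕ} (hn : 1 ≤ n) :
    Irrational ((n : ℝ) * θ) :=
  hθ.natCast_mul (by omega)

lemma floor_lt_irr {r : ℝ} (h : Irrational r) : ((⌊r⌋ : ℤ) : ℝ) < r :=
  (Int.floor_le r).lt_of_ne fun he => h.ne_int ⌊r⌋ he.symm

lemma lt_ceil_irr {r : ℝ} (h : Irrational r) : r < ((⌈r⌉ : ℤ) : ℝ) :=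
  (Int.le_ceil r).lt_of_ne fun he => h.ne_int ⌈r⌉ he

lemma ceil_irr_eq {r : ℝ} (h : Irrational r) : ⌈r⌉ = ⌊r⌋ + 1 := by
  refine le_antisymm (Int.ceil_le.2 ?_) (by exact_mod_cast Int.lt_ceil.2 (floor_lt_irr h))
  push_cast
  exact (Int.lt_floor_add_one r).le

/-- L2: adding `n` with `pinStep θ M + n ≤ M` doesn't break the ceiling sum. -/
lemma pinStep_add (θ : ℝ) (hθ : Irrational θ) (M : ℕ) (hM : 1 ≤ M) (n : ℕ)
    (hn : pinStep θ M + n ≤ M) :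
    ⌈((pinStep θ M + n : ℕ) : ℝ) * θ⌉ = ⌈(pinStep θ M : ℝ) * θ⌉ + ⌈(n : ℝ) * θ⌉ := by
  rcases Nat.eq_zero_or_pos n with rfl | hn1
  · norm_num
  obtain ⟨⟨hp1, hpM⟩, hmin⟩ := pinStep_spec θ M hM
  set p := pinStep θ M
  set A := ⌈(p : ℝ) * θ⌉ with hA
  set B := ⌈(n : ℝ) * θ⌉ with hB
  set C := ⌈((p + n : ℕ) : ℝ) * θ⌉ with hC
  have hcast : ((p + n : ℕ) : ℝ) * θ = (p : ℝ) * θ + (n : ℝ) * θ := by push_cast; ring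
  have hAgt : (p : ℝ) * θ < (A : ℝ) := lt_ceil_irr (irr_nat_mul hθ hp1)
  have hBfl : ((B : ℝ) - 1) < (n : ℝ) * θ := by
    have h1 : B = ⌊(n : ℝ) * θ⌋ + 1 := ceil_irr_eq (irr_nat_mul hθ hn1)
    have h2 := floor_lt_irr (irr_nat_mul hθ hn1)
    rw [h1]; push_cast; linarith
  have hCub : C ≤ A + B := by
    rw [hC, hcast]; exact Int.ceil_add_le _ _
  have hClb : A + B - 1 ≤ C := by
    have h1 : ((p + n : ℕ) : ℝ) * θ ≤ (C : ℝ) := Int.le_ceil _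
    have h2 : ((A : ℝ) - 1) < (p : ℝ) * θ := by
      have := Int.ceil_lt_add_one ((p : ℝ) * θ); linarith
    have h3' : ((A + B - 2 : ℤ) : ℝ) < (C : ℝ) := by push_cast; rw [hcast] at h1; linarith
    have h4 : A + B - 2 < C := by exact_mod_cast h3'
    omega
  by_contra hne
  have hCeq : C = A + B - 1 := by omega
  -- minimality: crit p ≤ crit (p+n)
  have hmin' := hmin (p + n) (by omega) hn
  rw [← hC] at hmin'
  have hppos : (0 : ℝ) < (p : ℝ) := by exact_mod_cast hp1
  have hpnpos : (0 : ℝ) < ((p + n : ℕ) : ℝ) := by positivity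
  rw [div_le_div_iff₀ hppos hpnpos] at hmin'
  -- hmin' : A * (p + n) ≤ C * p
  have hCcast : (C : ℝ) = (A : ℝ) + (B : ℝ) - 1 := by rw [hCeq]; push_cast; ring
  have hnpos : (0 : ℝ) < (n : ℝ) := by exact_mod_cast hn1
  have key1 : (A : ℝ) * (n : ℝ) > (p : ℝ) * ((n : ℝ) * θ) := by nlinarith
  have key2 : ((B : ℝ) - 1) * (p : ℝ) < (p : ℝ) * ((n : ℝ) * θ) := by nlinarith
  have hpn : ((p + n : ℕ) : ℝ) = (p : ℝ) + (n : ℝ) := by push_cast; ring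
  rw [hpn, hCcast] at hmin'
  nlinarith

/-- L4: the ceiling/floor mixed identity. -/
lemma pinStep_add_floor (θ : ℝ) (hθ : Irrational θ) (M : ℕ) (hM : 1 ≤ M) (n : ℕ)
    (hn1 : 1 ≤ n) (hn : pinStep θ M + n ≤ M) :
    ⌈((pinStep θ M + n : ℕ) : ℝ) * θ⌉ = ⌈(pinStep θ M : ℝ) * θ⌉ + ⌊(n : ℝ) * θ⌋ + 1 := by
  obtain ⟨⟨hp1, hpM⟩, hmin⟩ := pinStep_spec θ M hM
  set p := pinStep θ M
  set A := ⌈(p : ℝ) * θ⌉ with hA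
  set D := ⌊(n : ℝ) * θ⌋ with hD
  set C := ⌈((p + n : ℕ) : ℝ) * θ⌉ with hC
  have hcast : ((p + n : ℕ) : ℝ) * θ = (p : ℝ) * θ + (n : ℝ) * θ := by push_cast; ring
  have hAgt : (p : ℝ) * θ < (A : ℝ) := lt_ceil_irr (irr_nat_mul hθ hp1)
  have hAlt : (A : ℝ) < (p : ℝ) * θ + 1 := Int.ceil_lt_add_one _
  have hDlt : (D : ℝ) < (n : ℝ) * θ := floor_lt_irr (irr_nat_mul hθ hn1)
  have hDgt : (n : ℝ) * θ < (D : ℝ) + 1 := Int.lt_floor_add_one _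
  have hCub : C ≤ A + D + 1 := by
    rw [hC]
    refine Int.ceil_le.2 ?_
    rw [hcast]; push_cast; linarith
  have hClb : A + D ≤ C := by
    have h1 : ((p + n : ℕ) : ℝ) * θ ≤ (C : ℝ) := Int.le_ceil _
    rw [hcast] at h1
    have h3' : ((A + D - 1 : ℤ) : ℝ) < (C : ℝ) := by push_cast; linarith
    have h4 : A + D - 1 < C := by exact_mod_cast h3'
    omega
  by_contra hne
  have hCeq : C = A + D := by omega
  have hmin' := hmin (p + n) (by omega) hn
  rw [← hC] at hmin'
  have hppos : (0 : ℝ) < (p : ℝ) := by exact_mod_cast hp1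
  have hpnpos : (0 : ℝ) < ((p + n : ℕ) : ℝ) := by positivity
  rw [div_le_div_iff₀ hppos hpnpos] at hmin'
  have hCcast : (C : ℝ) = (A : ℝ) + (D : ℝ) := by rw [hCeq]; push_cast; ring
  have hnpos : (0 : ℝ) < (n : ℝ) := by exact_mod_cast hn1
  have hpn : ((p + n : ℕ) : ℝ) = (p : ℝ) + (n : ℝ) := by push_cast; ring
  rw [hpn, hCcast] at hmin'
  nlinarith

/- list lemmas -/

lemma pinListAux_zero (θ : ℝ) (fuel : ℕ) : pinListAux θ fuel 0 = [] := by
  cases fuel <;> simp [pinListAux]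

lemma pinListAux_succ (θ : ℝ) (fuel M : ℕ) (hM : 1 ≤ M) :
    pinListAux θ (fuel + 1) M = pinStep θ M :: pinListAux θ fuel (M - pinStep θ M) := by
  have h : M ≠ 0 := by omega
  simp [pinListAux, h]

lemma pinListAux_sum (θ : ℝ) : ∀ fuel M, M ≤ fuel → (pinListAux θ fuel M).sum = M := by
  intro fuel
  induction fuel with
  | zero => intro M h; interval_cases M; simp [pinListAux]
  | succ fuel ih =>
    intro M h
    rcases Nat.eq_zero_or_pos M with rfl | hM1
    · simp [pinListAux]
    obtain ⟨⟨hp1, hpM⟩, -⟩ := pinStep_spec θ M hM1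
    rw [pinListAux_succ θ fuel M hM1, List.sum_cons, ih (M - pinStep θ M) (by omega)]
    omega

lemma pinListAux_pos (θ : ℝ) : ∀ fuel M, ∀ x ∈ pinListAux θ fuel M, 1 ≤ x := by
  intro fuel
  induction fuel with
  | zero => intro M x hx; simp [pinListAux] at hx
  | succ fuel ih =>
    intro M x hx
    rcases Nat.eq_zero_or_pos M with rfl | hM1
    · simp [pinListAux] at hx
    rw [pinListAux_succ θ fuel M hM1] at hx
    rcases List.mem_cons.1 hx with rfl | hx
    · exact (pinStep_spec θ M hM1).1.1
    · exact ih _ x hx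

/-- L3: ceilings add up along prefixes of the incoming partition. -/
lemma pinListAux_take_sum (θ : ℝ) (hθ : Irrational θ) :
    ∀ fuel M m', M ≤ fuel →
      (((pinListAux θ fuel M).take m').map (fun n : ℕ => ⌈(n : ℝ) * θ⌉)).sum
        = ⌈((((pinListAux θ fuel M).take m').sum : ℕ) : ℝ) * θ⌉ := by
  intro fuel
  induction fuel with
  | zero => intro M m' h; interval_cases M; simp [pinListAux]
  | succ fuel ih =>
    intro M m' hM
    rcases Nat.eq_zero_or_pos M with rfl | hM1
    · simp [pinListAux]
    rw [pinListAux_succ θ fuel M hM1]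
    obtain ⟨⟨hp1, hpM⟩, -⟩ := pinStep_spec θ M hM1
    cases m' with
    | zero => simp
    | succ m'' =>
      rw [List.take_succ_cons, List.map_cons, List.sum_cons, List.sum_cons]
      set p := pinStep θ M with hp
      set L := pinListAux θ fuel (M - p) with hL
      have hfuel : M - p ≤ fuel := by omega
      have ihm := ih (M - p) m'' hfuel
      rw [← hL] at ihm
      set Y := (L.take m'').sum with hY
      have hYle : Y ≤ M - p := by
        have h1 := List.sum_take_add_sum_drop L m''
        have h2 := pinListAux_sum θ fuel (M - p) hfuel
        rw [← hL] at h2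
        omega
      rw [ihm]
      have hadd := pinStep_add θ hθ M hM1 Y (show p + Y ≤ M by omega)
      rw [← hp] at hadd
      exact hadd.symm

lemma neg_map_sum (θ : ℝ) (l : List ℕ) :
    (l.map (fun n : ℕ => ⌈(n : ℝ) * -θ⌉)).sum = -((l.map (fun n : ℕ => ⌊(n : ℝ) * θ⌋)).sum) := by
  induction l with
  | nil => simp
  | cons a l ih =>
    simp only [List.map_cons, List.sum_cons, ih]
    have h : (a : ℝ) * -θ = -((a : ℝ) * θ) := by ring
    rw [h, Int.ceil_neg]
    ring

/-- Floors add up along prefixes of the outgoing partition. -/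
lemma poutList_take_sum (θ : ℝ) (hθ : Irrational θ) (M m' : ℕ) :
    (((poutList θ M).take m').map (fun n : ℕ => ⌊(n : ℝ) * θ⌋)).sum
      = ⌊((((poutList θ M).take m').sum : ℕ) : ℝ) * θ⌋ := by
  have h := pinListAux_take_sum (-θ) hθ.neg M M m' le_rfl
  have hpl : pinListAux (-θ) M M = poutList θ M := rfl
  rw [hpl] at h
  rw [neg_map_sum θ ((poutList θ M).take m')] at h
  have h2 : ((((poutList θ M).take m').sum : ℕ) : ℝ) * -θ
      = -(((((poutList θ M).take m').sum : ℕ) : ℝ) * θ) := by ring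
  rw [h2, Int.ceil_neg] at h
  linarith

lemma pinList_cons (θ : ℝ) (M : ℕ) (hM : 1 ≤ M) :
    pinList θ M = pinStep θ M :: pinListAux θ (M - 1) (M - pinStep θ M) := by
  obtain ⟨N, rfl⟩ : ∃ N, M = N + 1 := ⟨M - 1, by omega⟩
  simp only [pinList]
  rw [pinListAux_succ θ N (N + 1) hM]
  norm_num

lemma map_coe_eq (θ : ℝ) (L : List ℕ) :
    (List.map (fun b : ℝ => ⌊b * θ⌋) (do
        let a ← L
        pure ((a : ℕ) : ℝ))) = L.map (fun b : ℕ => ⌊(b : ℝ) * θ⌋) := by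
  induction L with
  | nil => rfl
  | cons a L ih =>
    simp_all [List.pure_def, List.bind_eq_flatMap, List.flatMap_cons]

/-- with `a₁` the first entry of `P^in_θ(M)`, `b` the outgoing partition,
`m` minimal with `∑_{j≤m} bⱼ ≥ a₁`, and `b̄ := ∑_{j≤m} bⱼ − a₁` (positive since `k > 1`),
one has `⌊b̄θ⌋ = ∑_{j≤m} ⌊bⱼθ⌋ − ⌈a₁θ⌉`. -/
theorem floor_bbar (θ : ℝ) (hθ : Irrational θ) (M : ℕ) (hM : 1 ≤ M) (m : ℕ)
    (hml : m ≤ (poutList θ M).length)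
    (hm1 : (pinList θ M).headI ≤ (((poutList θ M).take m).sum))
    (hm2 : ∀ m' < m, (((poutList θ M).take m').sum) < (pinList θ M).headI)
    (hk : 2 ≤ (pinList θ M).length) :
    ⌊((((((poutList θ M).take m).sum : ℤ) - ((pinList θ M).headI : ℤ)) : ℤ) : ℝ) * θ⌋ =
      (((poutList θ M).take m).map (fun b => ⌊(b : ℝ) * θ⌋)).sum -
        ⌈((pinList θ M).headI : ℝ) * θ⌉ := by
  rw [map_coe_eq θ ((poutList θ M).take m)]
  have hcons := pinList_cons θ M hM
  have hhead : (pinList θ M).headI = pinStep θ M := by rw [hcons]; rfl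
  obtain ⟨⟨hp1, hpM⟩, -⟩ := pinStep_spec θ M hM
  rw [hhead] at hm1 hm2 ⊢
  set a1 := pinStep θ M with ha1
  -- M - a1 ≥ 1 from hk
  have hMa1 : 1 ≤ M - a1 := by
    by_contra h
    have h0 : M - a1 = 0 := by omega
    rw [hcons, h0, pinListAux_zero] at hk
    simp at hk
  set l := poutList θ M with hl
  have hsuml : l.sum = M := pinListAux_sum (-θ) M M le_rfl
  set S := (l.take m).sum with hS
  have hSle : S ≤ M := by
    have := List.sum_take_add_sum_drop l m
    omega
  have hfloorS : ((l.take m).map (fun b : ℕ => ⌊(b : ℝ) * θ⌋)).sum = ⌊((S : ℕ) : ℝ) * θ⌋ :=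
    poutList_take_sum θ hθ M m
  -- b̄ > 0
  have hlt : a1 < S := by
    rcases lt_or_eq_of_le hm1 with h | h
    · exact h
    exfalso
    have hSa : S = a1 := h.symm
    have hmlt : m < l.length := by
      rcases lt_or_eq_of_le hml with h' | h'
      · exact h'
      exfalso
      rw [h', List.take_of_length_le le_rfl] at hS
      omega
    set b := l[m] with hb
    have hbmem : b ∈ l := List.getElem_mem hmlt
    have hb1 : 1 ≤ b := pinListAux_pos (-θ) M M b hbmem
    have hS' : (l.take (m + 1)).sum = S + b := by
      rw [List.sum_take_succ l m hmlt, ← hS, ← hb]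
    have hble : S + b ≤ M := by
      have := List.sum_take_add_sum_drop l (m + 1)
      omega
    have h3 := poutList_take_sum θ hθ M (m + 1)
    rw [← hl, hS'] at h3
    have hmapsplit : ((l.take (m + 1)).map (fun n : ℕ => ⌊(n : ℝ) * θ⌋)).sum
        = ((l.take m).map (fun n : ℕ => ⌊(n : ℝ) * θ⌋)).sum + ⌊(b : ℝ) * θ⌋ := by
      rw [← List.take_concat_get' l m hmlt, List.map_append, List.sum_append]
      simp [hb]
    rw [hmapsplit, hfloorS] at h3
    -- h3 : ⌊Sθ⌋ + ⌊bθ⌋ = ⌊(S+b)θ⌋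
    have hL4 := pinStep_add_floor θ hθ M hM b hb1 (show a1 + b ≤ M by omega)
    rw [← ha1] at hL4
    have hca : ⌈(a1 : ℝ) * θ⌉ = ⌊(a1 : ℝ) * θ⌋ + 1 := ceil_irr_eq (irr_nat_mul hθ hp1)
    have hcab : ⌈((a1 + b : ℕ) : ℝ) * θ⌉ = ⌊((a1 + b : ℕ) : ℝ) * θ⌋ + 1 :=
      ceil_irr_eq (irr_nat_mul hθ (by omega))
    rw [hSa] at h3
    linarith [h3, hL4, hca, hcab]
  -- main computation
  set n := S - a1 with hn
  have hn1 : 1 ≤ n := by omega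
  have hL4 := pinStep_add_floor θ hθ M hM n hn1 (show a1 + n ≤ M by omega)
  rw [← ha1] at hL4
  have hcS : ⌈((S : ℕ) : ℝ) * θ⌉ = ⌊((S : ℕ) : ℝ) * θ⌋ + 1 :=
    ceil_irr_eq (irr_nat_mul hθ (by omega))
  have han : a1 + n = S := by omega
  rw [han] at hL4
  have hcast : (((S : ℤ) - (a1 : ℤ) : ℤ) : ℝ) = ((n : ℕ) : ℝ) := by
    have h' : (S : ℤ) - (a1 : ℤ) = ((n : ℕ) : ℤ) := by omega
    rw [h']
    norm_cast
  rw [hcast, hfloorS]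
  linarith [hL4, hcS]
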